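/- Let J_k be the graph obtained by taking one-sums of k copies of the 4-cycle C_4, identifying antipodal vertices so that the copies form a chain: in copy i, a_i and b_i are antipodal, and b_i is identified with a_{i+1} for i = 1,…,k−1. Then S(J_k, a_1, b_k) is isomorphic to the k-dimensional hypercube Q_k. -/

import Mathlib

open SimpleGraph

/-- The type of `a,b`-geodesics in `G`: paths from `a` to `b` of length `d_G(a,b)`. -/
def Geodesic {V : Type*} (G : SimpleGraph V) (a b : V) : Type _ :=
  {p : G.Walk a b // p.IsPath ∧ p.length = G.dist a b}

/-- Two geodesics differ at exactly the index `i` (comparing vertex sequences). -/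
def DiffAt {V : Type*} {G : SimpleGraph V} {a b : V} (U W : Geodesic G a b) (i : ℕ) : Prop :=
  U.1.support.getD i a ≠ W.1.support.getD i a ∧
    ∀ j, j ≠ i → U.1.support.getD j a = W.1.support.getD j a

/-- The shortest path graph `S(G,a,b)`: vertices are `a,b`-geodesics, adjacent iff their
vertex sequences differ in exactly one position. -/
def SPG {V : Type*} (G : SimpleGraph V) (a b : V) : SimpleGraph (Geodesic G a b) where
  Adj U W := ∃ i, DiffAt U W i
  symm := by
    constructor
    rintro U W ⟨i, hne, hj⟩
    exact ⟨i, hne.symm, fun j hji => (hj j hji).symm⟩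
  loopless := by
    constructor
    rintro U ⟨i, hne, -⟩
    exact hne rfl

/-- A graph is a shortest path graph if it is isomorphic to `S(G,a,b)` for some `G`, `a ≠ b`. -/
def IsSPGraph {α : Type*} (H : SimpleGraph α) : Prop :=
  ∃ (V : Type) (G : SimpleGraph V) (a b : V), a ≠ b ∧ Nonempty (H ≃g SPG G a b)

/-- The hypercube graph `Q_m` on binary strings of length `m`. -/
def hypercube (m : ℕ) : SimpleGraph (Fin m → Bool) where
  Adj x y := ∃! i, x i ≠ y i
  symm := by
    constructor
    rintro x y ⟨i, hi, hu⟩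
    exact ⟨i, Ne.symm hi, fun j hj => hu j (Ne.symm hj)⟩
  loopless := by
    constructor
    rintro x ⟨i, hi, -⟩
    exact hi rfl

/-- The chain `J_k` of `k` four-cycles: the `i`-th copy of `C₄` has antipodal vertices
`Sum.inl i` and `Sum.inl (i+1)` and middle vertices `Sum.inr (i, s)` for `s : Bool`,
consecutive copies sharing one antipodal vertex. -/
def Jgraph (k : ℕ) : SimpleGraph (Fin (k + 1) ⊕ (Fin k × Bool)) :=
  SimpleGraph.fromRel (fun u v =>
    match u, v with
    | Sum.inl j, Sum.inr (i, _) => j.val = i.val ∨ j.val = i.val + 1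
    | _, _ => False)

namespace SPGaux

section general
variable {V : Type*} {G : SimpleGraph V} {u v : V}

lemma support_getD (p : G.Walk u v) (d : V) (t : ℕ) :
    p.support.getD t d = if t ≤ p.length then p.getVert t else d := by
  induction p generalizing t with
  | nil =>
    cases t with
    | zero => simp [Walk.getVert_zero]
    | succ n => simp
  | cons h q ih =>
    cases t with
    | zero => simp [Walk.getVert_zero]
    | succ n =>
      simp only [Walk.support_cons, List.getD_cons_succ, ih, Walk.getVert_cons_succ,
        Walk.length_cons, Nat.succ_le_succ_iff]

lemma support_get (p : G.Walk u v) (t : ℕ) (ht : t < p.support.length) :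
    p.support.get ⟨t, ht⟩ = p.getVert t := by
  have h := support_getD p u t
  rw [List.getD_eq_getElem _ _ ht] at h
  rw [List.get_eq_getElem, h, if_pos]
  rw [Walk.length_support] at ht
  omega

lemma walk_ext (p q : G.Walk u v) (hl : p.length = q.length)
    (h : ∀ t, p.getVert t = q.getVert t) : p = q := by
  induction p with
  | nil =>
    cases q with
    | nil => rfl
    | cons h' q' => simp at hl
  | cons ha p' ih =>
    cases q with
    | nil => simp at hl
    | cons hb q' =>
      have hw := h 1
      rw [Walk.getVert_cons_succ, Walk.getVert_zero, Walk.getVert_cons_succ,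
        Walk.getVert_zero] at hw
      subst hw
      have : p' = q' := ih q' (by simpa using hl) (fun t => by
        have := h (t+1)
        rwa [Walk.getVert_cons_succ, Walk.getVert_cons_succ] at this)
      subst this
      rfl

end general

variable {k : ℕ}

abbrev Vk (k : ℕ) := Fin (k+1) ⊕ (Fin k × Bool)

def rank : Vk k → ℕ
  | .inl j => 2 * j.val
  | .inr (i, _) => 2 * i.val + 1

lemma adj_lr {j : Fin (k+1)} {i : Fin k} {s : Bool}
    (h : j.val = i.val ∨ j.val = i.val + 1) : (Jgraph k).Adj (Sum.inl j) (Sum.inr (i, s)) := by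
  rw [Jgraph, fromRel_adj]
  exact ⟨by simp, Or.inl h⟩

lemma rank_adj {u v : Vk k} (h : (Jgraph k).Adj u v) :
    rank u + 1 = rank v ∨ rank v + 1 = rank u := by
  rw [Jgraph, fromRel_adj] at h
  obtain ⟨-, h⟩ := h
  rcases u with j | ⟨i, s⟩ <;> rcases v with j' | ⟨i', s'⟩ <;> simp_all [rank] <;> omega

lemma rank_bound {u v : Vk k} (p : (Jgraph k).Walk u v) (s : ℕ) :
    ∀ d, rank (p.getVert (s+d)) ≤ rank (p.getVert s) + d ∧
      rank (p.getVert s) ≤ rank (p.getVert (s+d)) + d := by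
  intro d
  induction d with
  | zero => simp
  | succ d ih =>
    have step : rank (p.getVert (s+d)) + 1 = rank (p.getVert (s+d+1)) ∨
        rank (p.getVert (s+d+1)) + 1 = rank (p.getVert (s+d)) ∨
        p.getVert (s+d) = p.getVert (s+d+1) := by
      by_cases hlt : s + d < p.length
      · rcases rank_adj (p.adj_getVert_succ hlt) with h | h
        · exact Or.inl h
        · exact Or.inr (Or.inl h)
      · refine Or.inr (Or.inr ?_)
        rw [p.getVert_of_length_le (by omega), p.getVert_of_length_le (by omega)]
    have hs : s + (d+1) = s + d + 1 := by omega
    rw [hs]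
    rcases step with h | h | h
    · omega
    · omega
    · rw [← h]; omega

def chainW (f : Fin k → Bool) : (m : ℕ) → m + 1 ≤ k + 1 →
    (Jgraph k).Walk (Sum.inl ⟨k - m, Nat.lt_succ_of_le (Nat.sub_le k m)⟩) (Sum.inl (Fin.last k))
  | 0, _ => Walk.copy Walk.nil (by simp [Fin.last]) rfl
  | m+1, h =>
    Walk.cons
      (adj_lr (j := ⟨k - (m+1), Nat.lt_succ_of_le (Nat.sub_le k (m+1))⟩)
        (i := ⟨k - (m+1), by omega⟩) (s := f ⟨k - (m+1), by omega⟩) (Or.inl rfl))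
      (Walk.cons
        ((adj_lr (j := ⟨k - m, Nat.lt_succ_of_le (Nat.sub_le k m)⟩)
          (i := ⟨k - (m+1), by omega⟩) (s := f ⟨k - (m+1), by omega⟩)
          (Or.inr (by simp; omega))).symm)
        (chainW f m (by omega)))

lemma length_chainW (f : Fin k → Bool) : ∀ m (h : m + 1 ≤ k + 1), (chainW f m h).length = 2 * m
  | 0, _ => by simp [chainW]
  | m+1, h => by simp [chainW, length_chainW f m (by omega)]; omega

lemma chainW_inr (f : Fin k → Bool) :
    ∀ m (h : m + 1 ≤ k + 1) t i s, (chainW f m h).getVert t = Sum.inr (i, s) → s = f i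
  | 0, _, t, i, s => by
    intro hv
    rw [chainW, Walk.getVert_copy, Walk.getVert_of_length_le _ (by simp)] at hv
    simp at hv
  | m+1, h, 0, i, s => by intro hv; simp [chainW] at hv
  | m+1, h, 1, i, s => by
    intro hv
    rw [chainW] at hv
    simp only [Walk.getVert_cons_succ, Walk.getVert_zero] at hv
    have h2 := Sum.inr.inj hv
    have hi : (⟨k - (m+1), by omega⟩ : Fin k) = i := congrArg Prod.fst h2
    have hs : f ⟨k - (m+1), by omega⟩ = s := congrArg Prod.snd h2
    subst hi
    exact hs.symm
  | m+1, h, t+2, i, s => by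
    intro hv
    rw [chainW] at hv
    simp only [Walk.getVert_cons_succ] at hv
    exact chainW_inr f m (by omega) t i s hv

def Wf (_hk : 1 ≤ k) (f : Fin k → Bool) :
    (Jgraph k).Walk (Sum.inl 0) (Sum.inl (Fin.last k)) :=
  (chainW f k (le_refl _)).copy (by congr 1; ext; simp) rfl

lemma length_Wf (hk : 1 ≤ k) (f : Fin k → Bool) : (Wf hk f).length = 2 * k := by
  simp [Wf, length_chainW]

lemma Wf_inr (hk : 1 ≤ k) (f : Fin k → Bool) (t : ℕ) (i : Fin k) (s : Bool)
    (hv : (Wf hk f).getVert t = Sum.inr (i, s)) : s = f i := by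
  rw [Wf, Walk.getVert_copy] at hv
  exact chainW_inr f k (le_refl _) t i s hv

lemma length_ge (p : (Jgraph k).Walk (Sum.inl 0) (Sum.inl (Fin.last k))) :
    2 * k ≤ p.length := by
  have h := (rank_bound p 0 p.length).1
  rw [Nat.zero_add, Walk.getVert_zero, Walk.getVert_length] at h
  simpa [rank, Fin.last] using h

lemma dist_eq (hk : 1 ≤ k) :
    (Jgraph k).dist (Sum.inl 0) (Sum.inl (Fin.last k)) = 2 * k := by
  refine le_antisymm ?_ ?_
  · have h := SimpleGraph.dist_le (Wf hk fun _ => false)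
    rwa [length_Wf] at h
  · obtain ⟨p, hp⟩ := Reachable.exists_walk_length_eq_dist ⟨Wf hk fun _ => false⟩
    rw [← hp]
    exact length_ge p

lemma rank_getVert (p : (Jgraph k).Walk (Sum.inl 0) (Sum.inl (Fin.last k)))
    (hl : p.length = 2 * k) (t : ℕ) (ht : t ≤ 2 * k) : rank (p.getVert t) = t := by
  have h1 := (rank_bound p 0 t).1
  rw [Nat.zero_add, Walk.getVert_zero] at h1
  have h2 := (rank_bound p t (2 * k - t)).1
  have he : t + (2 * k - t) = p.length := by omega
  rw [he, Walk.getVert_length] at h2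
  rw [show rank (Sum.inl 0 : Vk k) = 0 by simp [rank]] at h1
  rw [show rank (Sum.inl (Fin.last k) : Vk k) = 2 * k by simp [rank]] at h2
  omega

lemma getVert_even (p : (Jgraph k).Walk (Sum.inl 0) (Sum.inl (Fin.last k)))
    (hl : p.length = 2 * k) (m : ℕ) (hm : m ≤ k) :
    p.getVert (2 * m) = Sum.inl ⟨m, Nat.lt_succ_of_le hm⟩ := by
  have h := rank_getVert p hl (2 * m) (by omega)
  rcases hv : p.getVert (2 * m) with j | ⟨i, s⟩
  · rw [hv] at h
    simp only [rank] at h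
    exact congrArg Sum.inl (Fin.ext (show j.val = m by omega))
  · rw [hv] at h
    simp only [rank] at h
    omega

lemma getVert_odd (p : (Jgraph k).Walk (Sum.inl 0) (Sum.inl (Fin.last k)))
    (hl : p.length = 2 * k) (m : ℕ) (hm : m < k) :
    ∃ s, p.getVert (2 * m + 1) = Sum.inr (⟨m, hm⟩, s) := by
  have h := rank_getVert p hl (2 * m + 1) (by omega)
  rcases hv : p.getVert (2 * m + 1) with j | ⟨i, s⟩
  · rw [hv] at h
    simp only [rank] at h
    omega
  · rw [hv] at h
    simp only [rank] at h
    refine ⟨s, ?_⟩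
    exact congrArg Sum.inr (Prod.ext (Fin.ext (show i.val = m by omega)) rfl)

lemma isPath_of (p : (Jgraph k).Walk (Sum.inl 0) (Sum.inl (Fin.last k)))
    (hl : p.length = 2 * k) : p.IsPath := by
  rw [Walk.isPath_def, List.nodup_iff_injective_get]
  rintro ⟨i, hi⟩ ⟨j, hj⟩ hij
  rw [support_get, support_get] at hij
  have hi' : i ≤ 2 * k := by rw [Walk.length_support, hl] at hi; omega
  have hj' : j ≤ 2 * k := by rw [Walk.length_support, hl] at hj; omega
  have := rank_getVert p hl i hi'
  rw [hij, rank_getVert p hl j hj'] at this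
  exact Fin.ext this.symm

/-- The bit sequence of a geodesic. -/
def fOf (p : (Jgraph k).Walk (Sum.inl 0) (Sum.inl (Fin.last k))) : Fin k → Bool :=
  fun i =>
    match p.getVert (2 * i.val + 1) with
    | .inr (_, s) => s
    | .inl _ => false

lemma getVert_odd' (p : (Jgraph k).Walk (Sum.inl 0) (Sum.inl (Fin.last k)))
    (hl : p.length = 2 * k) (i : Fin k) :
    p.getVert (2 * i.val + 1) = Sum.inr (i, fOf p i) := by
  obtain ⟨s, hs⟩ := getVert_odd p hl i.val i.isLt
  have hi : (⟨i.val, i.isLt⟩ : Fin k) = i := rfl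
  rw [hi] at hs
  rw [hs, fOf, hs]

lemma fOf_Wf (hk : 1 ≤ k) (f : Fin k → Bool) : fOf (Wf hk f) = f := by
  funext i
  exact Wf_inr hk f (2 * i.val + 1) i _ (getVert_odd' (Wf hk f) (length_Wf hk f) i)

lemma walk_determined (p q : (Jgraph k).Walk (Sum.inl 0) (Sum.inl (Fin.last k)))
    (hp : p.length = 2 * k) (hq : q.length = 2 * k) (h : fOf p = fOf q) : p = q := by
  refine walk_ext p q (by omega) (fun t => ?_)
  by_cases ht : t ≤ 2 * k
  · rcases Nat.even_or_odd t with ⟨m, hm⟩ | ⟨m, hm⟩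
    · have hm2 : t = 2 * m := by omega
      subst hm2
      rw [getVert_even p hp m (by omega), getVert_even q hq m (by omega)]
    · have hm2 : t = 2 * m + 1 := by omega
      subst hm2
      have hmk : m < k := by omega
      have hi : (⟨m, hmk⟩ : Fin k) = ⟨m, hmk⟩ := rfl
      rw [show (m : ℕ) = ((⟨m, hmk⟩ : Fin k) : ℕ) from rfl,
        getVert_odd' p hp ⟨m, hmk⟩, getVert_odd' q hq ⟨m, hmk⟩, h]
  · rw [p.getVert_of_length_le (by omega), q.getVert_of_length_le (by omega)]

/-- The geodesic corresponding to a bit sequence. -/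
def geo (hk : 1 ≤ k) (f : Fin k → Bool) :
    Geodesic (Jgraph k) (Sum.inl 0) (Sum.inl (Fin.last k)) :=
  ⟨Wf hk f, isPath_of _ (length_Wf hk f), by rw [length_Wf, dist_eq hk]⟩

lemma adj_char (hk : 1 ≤ k)
    (U W : Geodesic (Jgraph k) (Sum.inl 0) (Sum.inl (Fin.last k))) :
    (SPG (Jgraph k) (Sum.inl 0) (Sum.inl (Fin.last k))).Adj U W ↔
      ∃! i : Fin k, fOf U.1 i ≠ fOf W.1 i := by
  have hU : U.1.length = 2 * k := U.2.2.trans (dist_eq hk)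
  have hW : W.1.length = 2 * k := W.2.2.trans (dist_eq hk)
  have hgU := support_getD U.1 (Sum.inl 0)
  have hgW := support_getD W.1 (Sum.inl 0)
  constructor
  · rintro ⟨i, hne, hoth⟩
    rw [hgU i, hgW i, hU, hW] at hne
    by_cases hik : i ≤ 2 * k
    swap
    · rw [if_neg hik, if_neg hik] at hne; exact absurd rfl hne
    rw [if_pos hik, if_pos hik] at hne
    rcases Nat.even_or_odd i with ⟨m, hm⟩ | ⟨m, hm⟩
    · have hm2 : i = 2 * m := by omega
      subst hm2
      rw [getVert_even U.1 hU m (by omega), getVert_even W.1 hW m (by omega)] at hne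
      exact absurd rfl hne
    · have hm2 : i = 2 * m + 1 := by omega
      subst hm2
      have hmk : m < k := by omega
      rw [show (m : ℕ) = ((⟨m, hmk⟩ : Fin k) : ℕ) from rfl,
        getVert_odd' U.1 hU ⟨m, hmk⟩, getVert_odd' W.1 hW ⟨m, hmk⟩] at hne
      refine ⟨⟨m, hmk⟩, fun hc => hne (by rw [hc]), ?_⟩
      intro y hy
      by_contra hne'
      have hj : 2 * y.val + 1 ≠ 2 * m + 1 := by
        intro hc
        exact hne' (Fin.ext (show y.val = m by omega))
      have := hoth (2 * y.val + 1) hj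
      rw [hgU, hgW, hU, hW, if_pos (by have := y.isLt; omega),
        if_pos (by have := y.isLt; omega), getVert_odd' U.1 hU y,
        getVert_odd' W.1 hW y] at this
      exact hy (congrArg Prod.snd (Sum.inr.inj this))
  · rintro ⟨i, hi, huniq⟩
    refine ⟨2 * i.val + 1, ?_, ?_⟩
    · rw [hgU, hgW, hU, hW, if_pos (by have := i.isLt; omega),
        if_pos (by have := i.isLt; omega), getVert_odd' U.1 hU i, getVert_odd' W.1 hW i]
      intro hc
      exact hi (congrArg Prod.snd (Sum.inr.inj hc))
    · intro j hj
      rw [hgU, hgW, hU, hW]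
      by_cases hjk : j ≤ 2 * k
      swap
      · rw [if_neg hjk, if_neg hjk]
      rw [if_pos hjk, if_pos hjk]
      rcases Nat.even_or_odd j with ⟨m, hm⟩ | ⟨m, hm⟩
      · have hm2 : j = 2 * m := by omega
        subst hm2
        rw [getVert_even U.1 hU m (by omega), getVert_even W.1 hW m (by omega)]
      · have hm2 : j = 2 * m + 1 := by omega
        subst hm2
        have hmk : m < k := by omega
        have heq : fOf U.1 ⟨m, hmk⟩ = fOf W.1 ⟨m, hmk⟩ := by
          by_contra hne'
          have := huniq ⟨m, hmk⟩ hne'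
          apply hj
          rw [← this]
        rw [show (m : ℕ) = ((⟨m, hmk⟩ : Fin k) : ℕ) from rfl,
          getVert_odd' U.1 hU ⟨m, hmk⟩, getVert_odd' W.1 hW ⟨m, hmk⟩, heq]

end SPGaux

open SPGaux in
theorem stmt9 (k : ℕ) (hk : 1 ≤ k) :
    Nonempty (SPG (Jgraph k) (Sum.inl 0) (Sum.inl (Fin.last k)) ≃g hypercube k) := by
  have hlen : ∀ U : Geodesic (Jgraph k) (Sum.inl 0) (Sum.inl (Fin.last k)),
      U.1.length = 2 * k := fun U => U.2.2.trans (dist_eq hk)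
  let E : (Fin k → Bool) ≃ Geodesic (Jgraph k) (Sum.inl 0) (Sum.inl (Fin.last k)) :=
    { toFun := geo hk
      invFun := fun U => fOf U.1
      left_inv := fun f => fOf_Wf hk f
      right_inv := fun U => Subtype.ext
        (walk_determined _ _ (length_Wf hk _) (hlen U) (fOf_Wf hk _)) }
  refine ⟨SimpleGraph.Iso.symm ⟨E, ?_⟩⟩
  intro f g
  show (SPG (Jgraph k) (Sum.inl 0) (Sum.inl (Fin.last k))).Adj (geo hk f) (geo hk g) ↔
    (hypercube k).Adj f g
  rw [adj_char hk]
  show (∃! i : Fin k, fOf (Wf hk f) i ≠ fOf (Wf hk g) i) ↔ _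
  rw [fOf_Wf hk f, fOf_Wf hk g]
  rfl
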